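/- Let R be a commutative ring of characteristic p > 0. An element P = ∑_{i=0}^n λ_i F^i of the skew polynomial ring R[F;σ] is invertible if and only if λ_0 is a unit of R and λ_1, ..., λ_n are nilpotent. -/

import Mathlib

/-- Multiplication in the skew polynomial ring `R[F;σ]`, `F·λ = λ^p·F`. -/
def skewMul {R : Type*} [CommRing R] (p : ℕ) (P Q : ℕ → R) : ℕ → R :=
  fun k => ∑ i ∈ Finset.range (k + 1), P i * (Q (k - i)) ^ (p ^ i)

/-- The unit element of the skew polynomial ring. -/
def skewOne (R : Type*) [CommRing R] : ℕ → R := fun k => if k = 0 then 1 else 0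

section Aux
variable {R : Type*} [CommRing R]

lemma skewMul_def (p : ℕ) (P Q : ℕ → R) (k : ℕ) :
    skewMul p P Q k = ∑ i ∈ Finset.range (k + 1), P i * (Q (k - i)) ^ (p ^ i) := rfl

lemma skewMul_one (p : ℕ) (hp : 0 < p) (P : ℕ → R) : skewMul p P (skewOne R) = P := by
  funext k
  unfold skewMul skewOne
  rw [Finset.sum_eq_single k]
  · simp
  · intro i hi hne
    rw [Finset.mem_range] at hi
    have : k - i ≠ 0 := by omega
    simp [this, zero_pow (by positivity : p ^ i ≠ 0)]
  · simp

lemma one_skewMul (p : ℕ) (P : ℕ → R) : skewMul p (skewOne R) P = P := by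
  funext k
  unfold skewMul skewOne
  rw [Finset.sum_eq_single 0]
  · simp
  · intro i hi hne; simp [hne]
  · simp

lemma skewMul_assoc (p : ℕ) (hp : p.Prime) [CharP R p] (A B C : ℕ → R) :
    skewMul p (skewMul p A B) C = skewMul p A (skewMul p B C) := by
  haveI : Fact p.Prime := ⟨hp⟩
  haveI : ExpChar R p := ExpChar.prime hp
  funext k
  unfold skewMul
  simp only [Finset.sum_mul, sum_pow_char_pow, Finset.mul_sum, mul_pow, ← pow_mul, ← pow_add]
  rw [Finset.sum_sigma', Finset.sum_sigma']
  apply Finset.sum_nbij' (fun x => ⟨x.2, x.1 - x.2⟩) (fun x => ⟨x.1 + x.2, x.1⟩)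
  · intro x hx
    simp only [Finset.mem_sigma, Finset.mem_range] at *
    omega
  · intro x hx
    simp only [Finset.mem_sigma, Finset.mem_range] at *
    omega
  · intro x hx
    simp only [Finset.mem_sigma, Finset.mem_range] at hx
    ext <;> simp <;> omega
  · intro x hx
    simp only [Finset.mem_sigma, Finset.mem_range] at hx
    ext <;> simp
  · intro x hx
    obtain ⟨j, i⟩ := x
    simp only [Finset.mem_sigma, Finset.mem_range] at hx
    have h1 : k - i - (j - i) = k - j := by omega
    have h2 : i + (j - i) = j := by omega
    simp only [h1, h2, show j - i + i = j by omega, mul_assoc]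

/-- Right inverse coefficients. -/
def skewInvAux (p : ℕ) (P : ℕ → R) (v : R) : ℕ → R
  | 0 => v
  | (k+1) => -v * ∑ i ∈ Finset.range (k + 1), P (i + 1) * (skewInvAux p P v (k - i)) ^ p ^ (i + 1)
  decreasing_by exact Nat.lt_succ_of_le (Nat.sub_le k i)

/-- Left inverse coefficients. -/
def skewInvAux2 (p : ℕ) (P : ℕ → R) (v : R) : ℕ → R
  | 0 => v
  | (k+1) => -(v ^ p ^ (k + 1)) *
      ∑ i ∈ Finset.range (k + 1), (skewInvAux2 p P v (k - i)) * P (i + 1) ^ p ^ (k - i)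
  decreasing_by exact Nat.lt_succ_of_le (Nat.sub_le k i)

lemma skewMul_skewInvAux (p : ℕ) (P : ℕ → R) (v : R) (hv : P 0 * v = 1) :
    skewMul p P (skewInvAux p P v) = skewOne R := by
  funext k
  rw [skewMul_def]
  cases k with
  | zero => simpa [skewOne, skewInvAux] using hv
  | succ k =>
    rw [Finset.sum_range_succ']
    simp only [Nat.succ_sub_succ, pow_zero, pow_one, Nat.sub_self, Nat.sub_zero]
    rw [show skewInvAux p P v (k+1) = -v * ∑ i ∈ Finset.range (k + 1),
        P (i + 1) * (skewInvAux p P v (k - i)) ^ p ^ (i + 1) from by rw [skewInvAux]]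
    rw [skewOne, if_neg (Nat.succ_ne_zero k)]
    linear_combination (-(∑ i ∈ Finset.range (k + 1),
      P (i + 1) * (skewInvAux p P v (k - i)) ^ p ^ (i + 1))) * hv

lemma skewInvAux2_skewMul (p : ℕ) (P : ℕ → R) (v : R) (hv : P 0 * v = 1) :
    skewMul p (skewInvAux2 p P v) P = skewOne R := by
  funext k
  rw [skewMul_def]
  cases k with
  | zero => simpa [skewOne, skewInvAux2, mul_comm] using hv
  | succ k =>
    rw [Finset.sum_range_succ]
    rw [show skewInvAux2 p P v (k+1) = -(v ^ p ^ (k + 1)) *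
        ∑ i ∈ Finset.range (k + 1), (skewInvAux2 p P v (k - i)) * P (i + 1) ^ p ^ (k - i)
        from by rw [skewInvAux2]]
    have hS : ∑ i ∈ Finset.range (k + 1), (skewInvAux2 p P v (k - i)) * P (i + 1) ^ p ^ (k - i)
        = ∑ i ∈ Finset.range (k + 1), skewInvAux2 p P v i * (P (k + 1 - i)) ^ (p ^ i) := by
      rw [← Finset.sum_range_reflect (fun i => skewInvAux2 p P v i * (P (k + 1 - i)) ^ (p ^ i))]
      apply Finset.sum_congr rfl
      intro i hi
      rw [Finset.mem_range] at hi
      have h1 : k + 1 - 1 - i = k - i := by omega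
      have h2 : k + 1 - (k - i) = i + 1 := by omega
      rw [h1, h2]
    rw [hS, Nat.sub_self, skewOne, if_neg (Nat.succ_ne_zero k)]
    have hv2 : (v ^ p ^ (k+1)) * P 0 ^ p ^ (k + 1) = 1 := by
      rw [← mul_pow, mul_comm v (P 0), hv, one_pow]
    linear_combination (-(∑ i ∈ Finset.range (k + 1),
      skewInvAux2 p P v i * (P (k + 1 - i)) ^ (p ^ i))) * hv2

/-- membership of the inverse coefficients in powers of the ideal generated by the
nilpotent coefficients. -/
lemma skewInvAux_mem [DecidableEq R] (p : ℕ) (hp : 0 < p) (n : ℕ) (P : ℕ → R) (hP : ∀ i, n < i → P i = 0)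
    (v : R) (I : Ideal R) (hI : I = Ideal.span ((Finset.Icc 1 n).image P : Set R)) :
    ∀ t : ℕ, ∀ j : ℕ, n * t < j → skewInvAux p P v j ∈ I ^ (t + 1) := by
  intro t
  induction t with
  | zero =>
    intro j hj
    obtain ⟨m, rfl⟩ : ∃ m, j = m + 1 := ⟨j - 1, by omega⟩
    rw [pow_one, show skewInvAux p P v (m+1) = -v * ∑ i ∈ Finset.range (m + 1),
        P (i + 1) * (skewInvAux p P v (m - i)) ^ p ^ (i + 1) from by rw [skewInvAux]]
    refine I.mul_mem_left (-v) (Ideal.sum_mem I ?_)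
    intro i _
    by_cases h : n < i + 1
    · simp only [hP _ h, zero_mul]; exact zero_mem _
    · refine Ideal.mul_mem_right _ I ?_
      rw [hI]
      exact Ideal.subset_span (by
        simp only [Finset.coe_image, Set.mem_image, Finset.mem_coe, Finset.mem_Icc]
        exact ⟨i + 1, ⟨by omega, by omega⟩, rfl⟩)
  | succ t ih =>
    intro j hj
    obtain ⟨m, rfl⟩ : ∃ m, j = m + 1 := ⟨j - 1, by omega⟩
    rw [show skewInvAux p P v (m+1) = -v * ∑ i ∈ Finset.range (m + 1),
        P (i + 1) * (skewInvAux p P v (m - i)) ^ p ^ (i + 1) from by rw [skewInvAux]]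
    rw [pow_succ']
    refine Ideal.mul_mem_left _ (-v) (Ideal.sum_mem _ ?_)
    intro i _
    by_cases h : n < i + 1
    · simp only [hP _ h, zero_mul]; exact zero_mem _
    · have h1 : P (i + 1) ∈ I := by
        rw [hI]
        exact Ideal.subset_span (by
          simp only [Finset.coe_image, Set.mem_image, Finset.mem_coe, Finset.mem_Icc]
          exact ⟨i + 1, ⟨by omega, by omega⟩, rfl⟩)
      have h2 : skewInvAux p P v (m - i) ∈ I ^ (t + 1) := by
        apply ih
        rw [Nat.mul_succ] at hj
        omega
      have h3 : (skewInvAux p P v (m - i)) ^ p ^ (i + 1) ∈ I ^ (t + 1) :=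
        Ideal.pow_mem_of_mem _ h2 _ (by positivity)
      exact Ideal.mul_mem_mul h1 h3

end Aux

/-- An element `P = ∑_{i=0}^n λ_i F^i` of `R[F;σ]` is invertible iff `λ_0` is a
unit and `λ_1, …, λ_n` are nilpotent. -/
theorem skew_isUnit_iff {R : Type*} [CommRing R] (p : ℕ) (hp : p.Prime)
    [CharP R p] (n : ℕ) (P : ℕ → R) (hP : ∀ i, n < i → P i = 0) :
    (∃ Q : ℕ → R, (∃ m, ∀ j, m < j → Q j = 0) ∧
        skewMul p P Q = skewOne R ∧ skewMul p Q P = skewOne R) ↔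
      IsUnit (P 0) ∧ ∀ i, 1 ≤ i → i ≤ n → IsNilpotent (P i) := by
  classical
  constructor
  · rintro ⟨Q, ⟨m, hQ⟩, h1, h2⟩
    have h10 : P 0 * Q 0 = 1 := by
      have := congrFun h1 0
      simpa [skewMul_def, skewOne] using this
    have hu : IsUnit (P 0) := IsUnit.of_mul_eq_one _ h10
    refine ⟨hu, ?_⟩
    intro i hi1 hin
    rw [nilpotent_iff_mem_prime]
    intro J hJ
    by_contra hPiJ
    -- largest index with P _ ∉ J
    set s : Finset ℕ := (Finset.range (n + 1)).filter (fun i => P i ∉ J) with hs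
    have hsne : s.Nonempty := ⟨i, by simp [hs, Finset.mem_filter, hPiJ]; omega⟩
    set a := s.max' hsne with ha
    have haP : P a ∉ J := (Finset.mem_filter.mp (s.max'_mem hsne)).2
    have haJ : ∀ l, a < l → P l ∈ J := by
      intro l hl
      by_cases h : n < l
      · rw [hP _ h]; exact J.zero_mem
      · by_contra hc
        exact absurd (s.le_max' l (Finset.mem_filter.mpr ⟨Finset.mem_range.mpr (by omega), hc⟩))
          (by omega)
    have ha1 : 1 ≤ a := by
      have : i ∈ s := Finset.mem_filter.mpr ⟨Finset.mem_range.mpr (by omega), hPiJ⟩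
      have := s.le_max' i this
      omega
    -- largest index with Q _ ∉ J
    have hQ0 : Q 0 ∉ J := by
      intro hc
      have : (1 : R) ∈ J := by
        rw [← h10]; exact J.mul_mem_left _ hc
      exact hJ.ne_top (Ideal.eq_top_of_isUnit_mem J this isUnit_one)
    set sQ : Finset ℕ := (Finset.range (m + 1)).filter (fun i => Q i ∉ J) with hsQ
    have hsQne : sQ.Nonempty := ⟨0, by simp [hsQ, Finset.mem_filter, hQ0]⟩
    set b := sQ.max' hsQne with hb
    have hbQ : Q b ∉ J := (Finset.mem_filter.mp (sQ.max'_mem hsQne)).2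
    have hbJ : ∀ l, b < l → Q l ∈ J := by
      intro l hl
      by_cases h : m < l
      · rw [hQ _ h]; exact J.zero_mem
      · by_contra hc
        exact absurd (sQ.le_max' l (Finset.mem_filter.mpr ⟨Finset.mem_range.mpr (by omega), hc⟩))
          (by omega)
    -- the (a+b) coefficient of P*Q
    have hsum : ∑ l ∈ Finset.range (a + b + 1), P l * (Q (a + b - l)) ^ (p ^ l) = 0 := by
      have := congrFun h1 (a + b)
      rw [skewMul_def] at this
      rw [this, skewOne, if_neg (by omega)]
    have hterm : P a * (Q b) ^ (p ^ a) ∈ J := by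
      have hmem : a ∈ Finset.range (a + b + 1) := Finset.mem_range.mpr (by omega)
      have hrest : ∑ l ∈ (Finset.range (a + b + 1)).erase a,
          P l * (Q (a + b - l)) ^ (p ^ l) ∈ J := by
        refine Ideal.sum_mem _ ?_
        intro l hl
        rw [Finset.mem_erase, Finset.mem_range] at hl
        rcases lt_or_gt_of_ne hl.1 with h | h
        · -- l < a: Q (a+b-l) ∈ J
          refine J.mul_mem_left _ (Ideal.pow_mem_of_mem _ ?_ _ (pow_pos hp.pos _))
          exact hbJ _ (by omega)
        · exact J.mul_mem_right _ (haJ _ h)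
      have : P a * (Q b) ^ (p ^ a) = (∑ l ∈ Finset.range (a + b + 1),
          P l * (Q (a + b - l)) ^ (p ^ l)) - ∑ l ∈ (Finset.range (a + b + 1)).erase a,
          P l * (Q (a + b - l)) ^ (p ^ l) := by
        rw [← Finset.add_sum_erase _ _ hmem]
        simp [show a + b - a = b by omega]
      rw [this, hsum]
      exact J.sub_mem J.zero_mem hrest
    rcases hJ.mem_or_mem hterm with h | h
    · exact haP h
    · exact hbQ (hJ.mem_of_pow_mem _ h)
  · rintro ⟨hu, hnil⟩
    obtain ⟨u, hu'⟩ := hu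
    set v : R := ↑u⁻¹ with hv
    have hPv : P 0 * v = 1 := by
      rw [← hu', hv]
      exact u.mul_inv
    set Q := skewInvAux p P v with hQdef
    have hPQ : skewMul p P Q = skewOne R := skewMul_skewInvAux p P v hPv
    have hQ'P : skewMul p (skewInvAux2 p P v) P = skewOne R := skewInvAux2_skewMul p P v hPv
    have hQeq : skewInvAux2 p P v = Q := by
      calc skewInvAux2 p P v = skewMul p (skewInvAux2 p P v) (skewOne R) :=
            (skewMul_one p hp.pos _).symm
        _ = skewMul p (skewInvAux2 p P v) (skewMul p P Q) := by rw [hPQ]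
        _ = skewMul p (skewMul p (skewInvAux2 p P v) P) Q := (skewMul_assoc p hp _ _ _).symm
        _ = skewMul p (skewOne R) Q := by rw [hQ'P]
        _ = Q := one_skewMul p Q
    have hQP : skewMul p Q P = skewOne R := by rw [← hQeq]; exact hQ'P
    -- bounded support
    set I : Ideal R := Ideal.span ((Finset.Icc 1 n).image P : Set R) with hI
    have hIrad : I ≤ (⊥ : Ideal R).radical := by
      rw [hI, Ideal.span_le]
      intro x hx
      simp only [Finset.coe_image, Set.mem_image, Finset.mem_coe, Finset.mem_Icc] at hx
      obtain ⟨l, ⟨hl1, hl2⟩, rfl⟩ := hx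
      have : IsNilpotent (P l) := hnil l hl1 hl2
      simpa [nilradical] using mem_nilradical.mpr this
    obtain ⟨M, hM⟩ := Ideal.exists_pow_le_of_le_radical_of_fg hIrad
      (Submodule.fg_span (Finset.finite_toSet _))
    refine ⟨Q, ⟨n * M, ?_⟩, hPQ, hQP⟩
    intro j hj
    have hmem : Q j ∈ I ^ (M + 1) := skewInvAux_mem p hp.pos n P hP v I hI M j hj
    have : Q j ∈ (⊥ : Ideal R) := by
      refine hM ?_
      exact (Ideal.pow_le_pow_right (Nat.le_succ M)) hmem
    simpa using this
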